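/- Let G be a finite simple graph with vertex set V and h : V → ℝ an injective height function. Let u and v be adjacent vertices with h(v) < h(u); suppose no vertex separates u and v, every common neighbour x of u and v satisfies h(x) > h(v), the subgraph induced on the upper link of v is a path graph in which u is an interior (degree-2) vertex, u is a simple saddle with respect to h (its lower link and upper link each have exactly two connected components), and the subgraph induced on the neighbourhood of u is a cycle. Then {v} is a connected component of lowerlink_h(u), and for the swapped height function h': the lower link of u with respect to h' equals lowerlink_h(u) \ {v} and is nonempty and connected; the upper link of u with respect to h' equals upperlink_h(u) ∪ {v} and is connected; hence u is regular with respect to h'. Moreover the upper link of v with respect to h' equals upperlink_h(v) \ {u} and is disconnected and nonempty, and the lower link of v with respect to h' contains u; hence v is a saddle with respect to h'; i.e., the saddle shifts from u to v. -/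

import Mathlib

open SimpleGraph
open SimpleGraph

section Aux
variable {V : Type*} {G : SimpleGraph V} {s : Set V}

lemma aux_reachable_induce_of_walk {x y : V} (p : G.Walk x y)
    (hs : ∀ z ∈ p.support, z ∈ s) (hx : x ∈ s) (hy : y ∈ s) :
    (G.induce s).Reachable ⟨x, hx⟩ ⟨y, hy⟩ := by
  induction p with
  | nil => exact Reachable.refl _
  | cons ha q ih =>
    rename_i a b c
    have hb : b ∈ s := hs b (by simp)
    refine Reachable.trans ?_ (ih (fun z hz => hs z (by simp [hz])) hb hy)
    exact Adj.reachable (by simpa using ha)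

lemma aux_walk_val {a b : ↥s} (p : (G.induce s).Walk a b) :
    ∃ q : G.Walk a.val b.val, ∀ z ∈ q.support, ∃ hz : z ∈ s, (⟨z, hz⟩ : ↥s) ∈ p.support := by
  refine ⟨p.map (SimpleGraph.Embedding.induce s).toHom, ?_⟩
  intro z hz
  erw [SimpleGraph.Walk.support_map, List.mem_map] at hz
  obtain ⟨w, hw, rfl⟩ := hz
  exact ⟨w.2, hw⟩

lemma aux_isolated_reachable {W : Type*} {H : SimpleGraph W} {a b : W}
    (h : ∀ c, ¬ H.Adj a c) (hr : H.Reachable a b) : b = a := by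
  obtain ⟨p⟩ := hr
  cases p with
  | nil => rfl
  | cons ha q => exact absurd ha (h _)

end Aux

section Cyc

lemma aux_mod2 {n x : ℕ} (h : x < 2 * n) (hn : 0 < n) :
    x % n = x ∨ (n ≤ x ∧ x % n + n = x) := by
  rcases Nat.lt_or_ge x n with h' | h'
  · exact Or.inl (Nat.mod_eq_of_lt h')
  · right
    refine ⟨h', ?_⟩
    rw [Nat.mod_eq_sub_mod h', Nat.mod_eq_of_lt (by omega)]
    omega

lemma aux_cycle_step {n : ℕ} {v₀ i j : Fin n} (hi : i ≠ v₀) (hj : j ≠ v₀)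
    (ha : (SimpleGraph.cycleGraph n).Adj i j) :
    (j - v₀).val = (i - v₀).val + 1 ∨ (i - v₀).val = (j - v₀).val + 1 := by
  rw [SimpleGraph.cycleGraph_adj'] at ha
  have hn : 0 < n := i.pos
  have e1 : (i - j).val = ((n - j.val) + i.val) % n := by rw [Fin.sub_def]
  have e2 : (j - i).val = ((n - i.val) + j.val) % n := by rw [Fin.sub_def]
  have e3 : (i - v₀).val = ((n - v₀.val) + i.val) % n := by rw [Fin.sub_def]
  have e4 : (j - v₀).val = ((n - v₀.val) + j.val) % n := by rw [Fin.sub_def]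
  have m1 := aux_mod2 (n := n) (x := (n - j.val) + i.val) (by omega) hn
  have m2 := aux_mod2 (n := n) (x := (n - i.val) + j.val) (by omega) hn
  have m3 := aux_mod2 (n := n) (x := (n - v₀.val) + i.val) (by omega) hn
  have m4 := aux_mod2 (n := n) (x := (n - v₀.val) + j.val) (by omega) hn
  have hi' : i.val ≠ v₀.val := fun h => hi (Fin.ext h)
  have hj' : j.val ≠ v₀.val := fun h => hj (Fin.ext h)
  have hiv : i.val < n := i.isLt
  have hjv : j.val < n := j.isLt
  have hv0 : v₀.val < n := v₀.isLt
  omega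

lemma aux_cycle_ivt {n : ℕ} {v₀ : Fin n} (k : ℕ) :
    ∀ {x y : Fin n} (p : (SimpleGraph.cycleGraph n).Walk x y),
      (∀ z ∈ p.support, z ≠ v₀) → (x - v₀).val ≤ k → k ≤ (y - v₀).val →
      ∃ z ∈ p.support, (z - v₀).val = k := by
  intro x y p
  induction p with
  | nil =>
    rename_i w
    intro _ hx hy
    exact ⟨w, by simp, by omega⟩
  | @cons a b c ha q ih =>
    intro hv hx hy
    rcases eq_or_lt_of_le hx with heq | hlt
    · exact ⟨a, by simp, heq⟩
    · have hb := aux_cycle_step (hv a (by simp)) (hv b (by simp [SimpleGraph.Walk.start_mem_support])) ha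
      obtain ⟨z, hz, hzk⟩ := ih (fun z hz => hv z (by simp [hz])) (by omega) hy
      exact ⟨z, by simp [hz], hzk⟩

lemma aux_path_invariant {m : ℕ} {i : Fin m} {y : Fin m} :
    ∀ {x : Fin m} (p : (SimpleGraph.pathGraph m).Walk x y),
      (∀ z ∈ p.support, z ≠ i) → x.val < i.val → y.val < i.val := by
  intro x p
  induction p with
  | nil => exact fun _ hx => hx
  | @cons a b c ha q ih =>
    intro hv hx
    rw [SimpleGraph.pathGraph_adj] at ha
    have hb : b ≠ i := hv b (by simp [SimpleGraph.Walk.start_mem_support])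
    have hb' : b.val ≠ i.val := fun h => hb (Fin.ext h)
    exact ih (fun z hz => hv z (by simp [hz])) (by omega)

end Cyc


/-- The lower link of a vertex `w`: the set of neighbours of `w` strictly below `w`. -/
def lowerLink {V : Type*} (G : SimpleGraph V) (h : V → ℝ) (w : V) : Set V :=
  {x | G.Adj w x ∧ h x < h w}

/-- The upper link of a vertex `w`: the set of neighbours of `w` strictly above `w`. -/
def upperLink {V : Type*} (G : SimpleGraph V) (h : V → ℝ) (w : V) : Set V :=
  {x | G.Adj w x ∧ h w < h x}

/-- The height function obtained from `h` by swapping the heights of `u` and `v`. -/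
def swapH {V : Type*} [DecidableEq V] (h : V → ℝ) (u v : V) : V → ℝ :=
  fun w => if w = v then h u else if w = u then h v else h w

/-- Shift event moving a saddle from `u` to `v`: if `u` is a simple saddle whose link
is a cycle, the upper link of `v` is a path in which `u` is an interior (degree-2)
vertex, all common neighbours of `u` and `v` lie above `v`, and no vertex separates
`u` and `v`, then `{v}` is a connected component of the lower link of `u`, and after
swapping heights `u` becomes regular while `v` becomes a saddle. -/
theorem shift_event_saddle {V : Type*} [Fintype V] [DecidableEq V]
    (G : SimpleGraph V) (h : V → ℝ) (hinj : Function.Injective h) (u v : V)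
    (huv : G.Adj u v) (hlt : h v < h u)
    (hsep : ∀ w, w ≠ u → w ≠ v → ¬(h v < h w ∧ h w < h u))
    (hcommon : ∀ x, G.Adj u x → G.Adj v x → h v < h x)
    (hpath : ∃ n, Nonempty ((G.induce (upperLink G h v)) ≃g SimpleGraph.pathGraph n))
    (hdeg : {x ∈ upperLink G h v | G.Adj u x}.ncard = 2)
    (hsadL : Nat.card (G.induce (lowerLink G h u)).ConnectedComponent = 2)
    (hsadU : Nat.card (G.induce (upperLink G h u)).ConnectedComponent = 2)
    (hcycu : ∃ n, Nonempty ((G.induce (G.neighborSet u)) ≃g SimpleGraph.cycleGraph n)) :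
    ((G.induce (lowerLink G h u)).connectedComponentMk ⟨v, huv, hlt⟩).supp
      = {⟨v, huv, hlt⟩} ∧
    lowerLink G (swapH h u v) u = lowerLink G h u \ {v} ∧
    (lowerLink G (swapH h u v) u).Nonempty ∧
    (G.induce (lowerLink G (swapH h u v) u)).Connected ∧
    upperLink G (swapH h u v) u = upperLink G h u ∪ {v} ∧
    (G.induce (upperLink G (swapH h u v) u)).Connected ∧
    upperLink G (swapH h u v) v = upperLink G h v \ {u} ∧
    (upperLink G (swapH h u v) v).Nonempty ∧
    ¬ (G.induce (upperLink G (swapH h u v) v)).Connected ∧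
    u ∈ lowerLink G (swapH h u v) v := by
  have hne : u ≠ v := huv.ne
  have hsu : swapH h u v u = h v := by simp [swapH, hne]
  have hsv : swapH h u v v = h u := by simp [swapH]
  have hso : ∀ w, w ≠ u → w ≠ v → swapH h u v w = h w := by
    intro w h1 h2; simp [swapH, h1, h2]
  have eq2 : lowerLink G (swapH h u v) u = lowerLink G h u \ {v} := by
    ext x
    constructor
    · rintro ⟨hadj, hx⟩
      have hxu : x ≠ u := hadj.ne'
      by_cases hxv : x = v
      · subst hxv; rw [hsu, hsv] at hx; exact absurd hx (not_lt.mpr hlt.le)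
      · rw [hsu, hso x hxu hxv] at hx
        exact ⟨⟨hadj, hx.trans hlt⟩, hxv⟩
    · rintro ⟨⟨hadj, hx⟩, hxv⟩
      have hxu : x ≠ u := hadj.ne'
      have hxv' : x ≠ v := hxv
      refine ⟨hadj, ?_⟩
      rw [hsu, hso x hxu hxv']
      rcases lt_or_ge (h x) (h v) with h' | h'
      · exact h'
      · exact absurd ⟨lt_of_le_of_ne h' (Ne.symm (fun hh => hxv' (hinj hh))), hx⟩
          (hsep x hxu hxv')
  have eq5 : upperLink G (swapH h u v) u = upperLink G h u ∪ {v} := by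
    ext x
    constructor
    · rintro ⟨hadj, hx⟩
      have hxu : x ≠ u := hadj.ne'
      by_cases hxv : x = v
      · exact Or.inr hxv
      · rw [hsu, hso x hxu hxv] at hx
        rcases lt_or_ge (h u) (h x) with h' | h'
        · exact Or.inl ⟨hadj, h'⟩
        · exact absurd ⟨hx, lt_of_le_of_ne h' (fun hh => hxu (hinj hh))⟩ (hsep x hxu hxv)
    · rintro (⟨hadj, hx⟩ | hxv)
      · have hxu : x ≠ u := hadj.ne'
        have hxv : x ≠ v := fun hh => absurd (hh ▸ hx) (not_lt.mpr hlt.le)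
        exact ⟨hadj, by rw [hsu, hso x hxu hxv]; exact hlt.trans hx⟩
      · have hxv : x = v := hxv
        subst hxv
        exact ⟨huv, by rw [hsu, hsv]; exact hlt⟩
  have eq7 : upperLink G (swapH h u v) v = upperLink G h v \ {u} := by
    ext x
    constructor
    · rintro ⟨hadj, hx⟩
      have hxv : x ≠ v := hadj.ne'
      by_cases hxu : x = u
      · subst hxu; rw [hsu, hsv] at hx; exact absurd hx (not_lt.mpr hlt.le)
      · rw [hsv, hso x hxu hxv] at hx
        exact ⟨⟨hadj, hlt.trans hx⟩, hxu⟩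
    · rintro ⟨⟨hadj, hx⟩, hxu⟩
      have hxv : x ≠ v := hadj.ne'
      have hxu' : x ≠ u := hxu
      refine ⟨hadj, ?_⟩
      rw [hsv, hso x hxu' hxv]
      rcases lt_or_ge (h u) (h x) with h' | h'
      · exact h'
      · exact absurd ⟨hx, lt_of_le_of_ne h' (fun hh => hxu' (hinj hh))⟩ (hsep x hxu' hxv)
  have part10 : u ∈ lowerLink G (swapH h u v) v :=
    ⟨huv.symm, by rw [hsu, hsv]; exact hlt⟩
  -- Part 1 and the lower-link results
  set L := lowerLink G h u with hL
  let v' : ↥L := ⟨v, huv, hlt⟩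
  have hiso : ∀ y : ↥L, ¬ (G.induce L).Adj v' y := by
    rintro ⟨x, hxL⟩ hadj
    have hadj' : G.Adj v x := by simpa using hadj
    have hxu : x ≠ u := fun hh => (by simpa [hh] using hxL.2 : h u < h u).false
    exact hsep x hxu hadj'.ne' ⟨hcommon x hxL.1 hadj', hxL.2⟩
  have part1 : ((G.induce L).connectedComponentMk v').supp = {v'} := by
    ext y
    simp only [ConnectedComponent.mem_supp_iff, Set.mem_singleton_iff]
    constructor
    · intro hq
      exact aux_isolated_reachable hiso ((ConnectedComponent.exact hq).symm)
    · rintro rfl; rfl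
  obtain ⟨c, d, hcd, hcduniv⟩ := Nat.card_eq_two_iff.mp hsadL
  have htwo : ∀ z : (G.induce L).ConnectedComponent, z = c ∨ z = d := by
    intro z
    have : z ∈ ({c, d} : Set _) := hcduniv ▸ Set.mem_univ z
    simpa using this
  have hother : ∃ w : ↥L, w.val ≠ v := by
    have : ∃ C : (G.induce L).ConnectedComponent, C ≠ (G.induce L).connectedComponentMk v' := by
      rcases htwo ((G.induce L).connectedComponentMk v') with hh | hh
      · exact ⟨d, by rw [hh]; exact (Ne.symm hcd)⟩
      · exact ⟨c, by rw [hh]; exact hcd⟩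
    obtain ⟨C, hC⟩ := this
    obtain ⟨w, hw⟩ := C.exists_rep
    refine ⟨w, fun hwv => hC ?_⟩
    rw [← hw]
    congr 1
    exact Subtype.ext hwv
  obtain ⟨w, hwv⟩ := hother
  have part3 : (L \ {v}).Nonempty := ⟨w.val, w.2, hwv⟩
  have hcomp_ne : ∀ z : ↥(L \ {v}),
      (G.induce L).connectedComponentMk ⟨z.val, z.2.1⟩ ≠ (G.induce L).connectedComponentMk v' := by
    intro z heq
    have : (⟨z.val, z.2.1⟩ : ↥L) ∈ ((G.induce L).connectedComponentMk v').supp := heq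
    rw [part1] at this
    exact z.2.2 (congrArg Subtype.val this)
  have part4 : (G.induce (L \ {v})).Connected := by
    have hne : Nonempty ↥(L \ {v}) := ⟨⟨w.val, w.2, hwv⟩⟩
    refine SimpleGraph.Connected.mk ?_
    intro x y
    have hxy : (G.induce L).connectedComponentMk ⟨x.val, x.2.1⟩
        = (G.induce L).connectedComponentMk ⟨y.val, y.2.1⟩ := by
      rcases htwo ((G.induce L).connectedComponentMk ⟨x.val, x.2.1⟩) with h1 | h1 <;>
        rcases htwo ((G.induce L).connectedComponentMk ⟨y.val, y.2.1⟩) with h2 | h2 <;>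
        rcases htwo ((G.induce L).connectedComponentMk v') with h3 | h3 <;>
        first
          | (exact absurd (h1.trans h3.symm) (hcomp_ne x))
          | (exact absurd (h2.trans h3.symm) (hcomp_ne y))
          | (rw [h1, h2])
    obtain ⟨p⟩ := ConnectedComponent.exact hxy
    have hsup : ∀ z ∈ p.support, z ≠ v' := by
      intro z hz hzv
      have : (G.induce L).connectedComponentMk ⟨x.val, x.2.1⟩
          = (G.induce L).connectedComponentMk z :=
        ConnectedComponent.sound ⟨p.takeUntil z hz⟩
      exact hcomp_ne x (this.trans (by rw [hzv]))
    obtain ⟨q, hq⟩ := aux_walk_val p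
    have hqs : ∀ z ∈ q.support, z ∈ L \ {v} := by
      intro z hz
      obtain ⟨hz1, hz2⟩ := hq z hz
      exact ⟨hz1, fun hzv => hsup _ hz2 (Subtype.ext hzv)⟩
    have := aux_reachable_induce_of_walk q hqs x.2 y.2
    simpa using this
  -- Part 6 : connectivity of the new upper link of u
  have part6 : (G.induce (upperLink G h u ∪ {v})).Connected := by
    set ℓ₀ := w.val with hℓ₀def
    have hℓL : ℓ₀ ∈ lowerLink G h u := w.2
    have hℓv : ℓ₀ ≠ v := hwv
    set U := upperLink G h u with hUdef
    obtain ⟨n, ⟨e⟩⟩ := hcycu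
    have hvN : v ∈ G.neighborSet u := huv
    have hℓN : ℓ₀ ∈ G.neighborSet u := hℓL.1
    have hUne : ∃ w, w ∈ U := by
      have h1 : Nonempty (G.induce U).ConnectedComponent := by
        rcases isEmpty_or_nonempty (G.induce U).ConnectedComponent with hE | hN
        · rw [Nat.card_of_isEmpty] at hsadU; omega
        · exact hN
      obtain ⟨C⟩ := h1
      obtain ⟨z, _⟩ := C.exists_rep
      exact ⟨z.val, z.2⟩
    obtain ⟨w₀, hw₀⟩ := hUne
    have hw₀N : w₀ ∈ G.neighborSet u := hw₀.1
    have hn3 : 3 ≤ n := by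
      by_contra hcon
      push_neg at hcon
      have d1 : (⟨v, hvN⟩ : ↥(G.neighborSet u)) ≠ ⟨ℓ₀, hℓN⟩ := by
        intro hh; exact hℓv (congrArg Subtype.val hh).symm
      have d2 : (⟨v, hvN⟩ : ↥(G.neighborSet u)) ≠ ⟨w₀, hw₀N⟩ := by
        intro hh
        have : v = w₀ := congrArg Subtype.val hh
        exact absurd (this ▸ hw₀.2) (not_lt.mpr hlt.le)
      have d3 : (⟨ℓ₀, hℓN⟩ : ↥(G.neighborSet u)) ≠ ⟨w₀, hw₀N⟩ := by
        intro hh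
        have : ℓ₀ = w₀ := congrArg Subtype.val hh
        exact absurd (this ▸ hℓL.2) (not_lt.mpr hw₀.2.le)
      have e1 : e ⟨v, hvN⟩ ≠ e ⟨ℓ₀, hℓN⟩ := fun hh => d1 (e.injective hh)
      have e2 : e ⟨v, hvN⟩ ≠ e ⟨w₀, hw₀N⟩ := fun hh => d2 (e.injective hh)
      have e3 : e ⟨ℓ₀, hℓN⟩ ≠ e ⟨w₀, hw₀N⟩ := fun hh => d3 (e.injective hh)
      have v1 : (e ⟨v, hvN⟩).val ≠ (e ⟨ℓ₀, hℓN⟩).val := fun hh => e1 (Fin.ext hh)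
      have v2 : (e ⟨v, hvN⟩).val ≠ (e ⟨w₀, hw₀N⟩).val := fun hh => e2 (Fin.ext hh)
      have v3 : (e ⟨ℓ₀, hℓN⟩).val ≠ (e ⟨w₀, hw₀N⟩).val := fun hh => e3 (Fin.ext hh)
      have l1 := (e ⟨v, hvN⟩).isLt
      have l2 := (e ⟨ℓ₀, hℓN⟩).isLt
      have l3 := (e ⟨w₀, hw₀N⟩).isLt
      omega
    obtain ⟨m, rfl⟩ : ∃ m, n = m + 3 := ⟨n - 3, by omega⟩
    set v₀ := e ⟨v, hvN⟩ with hv₀def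
    have hone : ((1 : Fin (m + 3))).val = 1 := rfl
    have hadj_a : (SimpleGraph.cycleGraph (m + 3)).Adj v₀ (v₀ + 1) := by
      rw [SimpleGraph.cycleGraph_adj']
      right
      rw [show v₀ + 1 - v₀ = 1 by abel]
      exact hone
    have hadj_b : (SimpleGraph.cycleGraph (m + 3)).Adj v₀ (v₀ - 1) := by
      rw [SimpleGraph.cycleGraph_adj']
      left
      rw [show v₀ - (v₀ - 1) = 1 by abel]
      exact hone
    have key : ∀ x₀ : Fin (m + 3), (SimpleGraph.cycleGraph (m + 3)).Adj v₀ x₀ →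
        (e.symm x₀).val ∈ U ∧ G.Adj v (e.symm x₀).val := by
      intro x₀ hadj
      have h1 : (G.induce (G.neighborSet u)).Adj ⟨v, hvN⟩ (e.symm x₀) := by
        rw [← e.map_adj_iff]
        simpa using hadj
      have hGadj : G.Adj v (e.symm x₀).val := by simpa using h1
      have hxN : G.Adj u (e.symm x₀).val := (e.symm x₀).2
      have hxu : (e.symm x₀).val ≠ u := hxN.ne'
      have hxv : (e.symm x₀).val ≠ v := hGadj.ne'
      have h2 : h v < h (e.symm x₀).val := hcommon _ hxN hGadj
      have h3 : h u < h (e.symm x₀).val := by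
        rcases lt_or_ge (h u) (h (e.symm x₀).val) with h' | h'
        · exact h'
        · exact absurd ⟨h2, lt_of_le_of_ne h' (fun hh => hxu (hinj hh))⟩ (hsep _ hxu hxv)
      exact ⟨⟨hxN, h3⟩, hGadj⟩
    obtain ⟨hAU, hAv⟩ := key _ hadj_a
    obtain ⟨hBU, hBv⟩ := key _ hadj_b
    set A := e.symm (v₀ + 1) with hAdef
    set B := e.symm (v₀ - 1) with hBdef
    have hUN : ∀ {x : V}, x ∈ U → x ∈ G.neighborSet u := fun hx => hx.1
    let f : G.induce U →g SimpleGraph.cycleGraph (m + 3) :=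
      ⟨fun z => e ⟨z.val, hUN z.2⟩, by
        intro z w hzw
        exact e.map_adj_iff.mpr (by simpa using hzw)⟩
    have hABne : ¬ (G.induce U).Reachable ⟨A.val, hAU⟩ ⟨B.val, hBU⟩ := by
      intro hr
      obtain ⟨p⟩ := hr
      have hnov : ∀ z ∈ (p.map f).support, z ≠ v₀ := by
        intro z hz hzv
        rw [SimpleGraph.Walk.support_map, List.mem_map] at hz
        obtain ⟨wz, hwz, hfwz⟩ := hz
        have : (⟨wz.val, hUN wz.2⟩ : ↥(G.neighborSet u)) = ⟨v, hvN⟩ :=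
          e.injective (by rw [← hv₀def, ← hzv, ← hfwz]; rfl)
        have hwv' : wz.val = v := congrArg Subtype.val this
        exact absurd (hwv' ▸ wz.2.2) (not_lt.mpr hlt.le)
      have hstart : f ⟨A.val, hAU⟩ = v₀ + 1 := by
        show e ⟨A.val, _⟩ = v₀ + 1
        rw [show (⟨A.val, hUN hAU⟩ : ↥(G.neighborSet u)) = A from Subtype.ext rfl, hAdef]
        exact e.apply_symm_apply _
      have hend : f ⟨B.val, hBU⟩ = v₀ - 1 := by
        show e ⟨B.val, _⟩ = v₀ - 1
        rw [show (⟨B.val, hUN hBU⟩ : ↥(G.neighborSet u)) = B from Subtype.ext rfl, hBdef]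
        exact e.apply_symm_apply _
      set ℓ' := e ⟨ℓ₀, hℓN⟩ with hℓ'def
      have hℓne : ℓ' ≠ v₀ := by
        intro hh
        exact hℓv (congrArg Subtype.val (e.injective hh))
      have h1k : 1 ≤ (ℓ' - v₀).val := by
        rcases Nat.eq_zero_or_pos (ℓ' - v₀).val with h0 | h0
        · exact absurd (sub_eq_zero.mp (Fin.ext h0)) hℓne
        · exact h0
      have hrx : ((v₀ + 1 : Fin (m + 3)) - v₀).val = 1 := by
        rw [show v₀ + 1 - v₀ = 1 by abel]; exact hone
      have hry : ((v₀ - 1 : Fin (m + 3)) - v₀).val = m + 2 := by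
        rw [show v₀ - 1 - v₀ = -1 by abel, Fin.neg_def]
        show ((m + 3) - (1 : Fin (m+3)).val) % (m + 3) = m + 2
        rw [hone]
        exact Nat.mod_eq_of_lt (by omega)
      have hky : (ℓ' - v₀).val ≤ m + 2 := by
        have := (ℓ' - v₀).isLt; omega
      obtain ⟨z, hz, hzval⟩ := aux_cycle_ivt ((ℓ' - v₀).val) (p.map f) hnov
        (by rw [hstart, hrx]; exact h1k) (by rw [hend, hry]; exact hky)
      have hzℓ : z = ℓ' := sub_left_inj.mp (Fin.ext hzval)
      rw [SimpleGraph.Walk.support_map, List.mem_map] at hz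
      obtain ⟨wz, hwz, hfwz⟩ := hz
      have : (⟨wz.val, hUN wz.2⟩ : ↥(G.neighborSet u)) = ⟨ℓ₀, hℓN⟩ :=
        e.injective (by rw [← hℓ'def, ← hzℓ, ← hfwz]; rfl)
      have hwℓ : wz.val = ℓ₀ := congrArg Subtype.val this
      exact absurd (hwℓ ▸ wz.2.2) (not_lt.mpr hℓL.2.le)
    obtain ⟨c₂, d₂, hcd₂, hcduniv₂⟩ := Nat.card_eq_two_iff.mp hsadU
    have htwo₂ : ∀ z : (G.induce U).ConnectedComponent, z = c₂ ∨ z = d₂ := by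
      intro z
      have : z ∈ ({c₂, d₂} : Set _) := hcduniv₂ ▸ Set.mem_univ z
      simpa using this
    have hABne' : (G.induce U).connectedComponentMk ⟨A.val, hAU⟩
        ≠ (G.induce U).connectedComponentMk ⟨B.val, hBU⟩ :=
      fun hh => hABne (ConnectedComponent.exact hh)
    have hAB : ∀ z : ↥U, (G.induce U).connectedComponentMk z
        = (G.induce U).connectedComponentMk ⟨A.val, hAU⟩
        ∨ (G.induce U).connectedComponentMk z
        = (G.induce U).connectedComponentMk ⟨B.val, hBU⟩ := by
      intro z
      rcases htwo₂ ((G.induce U).connectedComponentMk ⟨A.val, hAU⟩) with hA | hA <;>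
        rcases htwo₂ ((G.induce U).connectedComponentMk ⟨B.val, hBU⟩) with hB | hB <;>
        rcases htwo₂ ((G.induce U).connectedComponentMk z) with hz | hz <;>
        first
          | (exact absurd (hA.trans hB.symm) hABne')
          | (exact Or.inl (hz.trans hA.symm))
          | (exact Or.inr (hz.trans hB.symm))
    have hvT : v ∈ U ∪ {v} := Or.inr rfl
    have hAT : A.val ∈ U ∪ {v} := Or.inl hAU
    have hBT : B.val ∈ U ∪ {v} := Or.inl hBU
    have hadjvA : (G.induce (U ∪ {v})).Adj ⟨A.val, hAT⟩ ⟨v, hvT⟩ := by simpa using hAv.symm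
    have hadjvB : (G.induce (U ∪ {v})).Adj ⟨B.val, hBT⟩ ⟨v, hvT⟩ := by simpa using hBv.symm
    have hlift : ∀ (x y : ↥U), (G.induce U).Reachable x y →
        (G.induce (U ∪ {v})).Reachable ⟨x.val, Or.inl x.2⟩ ⟨y.val, Or.inl y.2⟩ := by
      intro x y hr
      obtain ⟨p⟩ := hr
      obtain ⟨q, hq⟩ := aux_walk_val p
      refine aux_reachable_induce_of_walk q ?_ _ _
      intro z hz
      obtain ⟨hz1, _⟩ := hq z hz
      exact Or.inl hz1
    have hUreach : ∀ x : ↥(U ∪ {v}), (G.induce (U ∪ {v})).Reachable x ⟨v, hvT⟩ := by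
      rintro ⟨x, hx⟩
      rcases hx with hxU | hxv
      · rcases hAB ⟨x, hxU⟩ with h1 | h1
        · have hr := ConnectedComponent.exact h1
          exact ((hlift _ _ hr).trans hadjvA.reachable)
        · have hr := ConnectedComponent.exact h1
          exact ((hlift _ _ hr).trans hadjvB.reachable)
      · have : (⟨x, Or.inr hxv⟩ : ↥(U ∪ {v})) = ⟨v, hvT⟩ := Subtype.ext hxv
        rw [this]
    have : Nonempty ↥(U ∪ {v}) := ⟨⟨v, hvT⟩⟩
    exact SimpleGraph.Connected.mk (fun x y => (hUreach x).trans (hUreach y).symm)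
  -- Parts 8 and 9 : the path argument for the upper link of v
  have path89 : (upperLink G h v \ {u}).Nonempty ∧
      ¬ (G.induce (upperLink G h v \ {u})).Connected := by
    set Sv := upperLink G h v with hSvdef
    have hus : u ∈ Sv := ⟨huv.symm, hlt⟩
    obtain ⟨mm, ⟨ep⟩⟩ := hpath
    obtain ⟨a, b, hab, hset⟩ := Set.ncard_eq_two.mp hdeg
    have haS : a ∈ Sv ∧ G.Adj u a := by
      have : a ∈ {x ∈ Sv | G.Adj u x} := by rw [hset]; exact Or.inl rfl
      exact this
    have hbS : b ∈ Sv ∧ G.Adj u b := by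
      have : b ∈ {x ∈ Sv | G.Adj u x} := by rw [hset]; exact Or.inr rfl
      exact this
    have hau : a ≠ u := haS.2.ne'
    have hbu : b ≠ u := hbS.2.ne'
    set i := ep ⟨u, hus⟩ with hidef
    set α := ep ⟨a, haS.1⟩ with hadef
    set β := ep ⟨b, hbS.1⟩ with hbdef
    have hadjα : (SimpleGraph.pathGraph mm).Adj i α := by
      rw [hidef, hadef, ep.map_adj_iff]
      simpa using haS.2
    have hadjβ : (SimpleGraph.pathGraph mm).Adj i β := by
      rw [hidef, hbdef, ep.map_adj_iff]
      simpa using hbS.2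
    have hαβ : α ≠ β := by
      intro hh
      exact hab (congrArg Subtype.val (ep.injective hh))
    rw [SimpleGraph.pathGraph_adj] at hadjα hadjβ
    have hαβv : α.val ≠ β.val := fun hh => hαβ (Fin.ext hh)
    have hcase : (α.val < i.val ∧ i.val < β.val) ∨ (β.val < i.val ∧ i.val < α.val) := by
      omega
    have core : ∀ (c d : V) (hc : c ∈ Sv) (hd : d ∈ Sv), c ≠ u → d ≠ u →
        (ep ⟨c, hc⟩).val < i.val → i.val < (ep ⟨d, hd⟩).val →
        ¬ (G.induce (Sv \ {u})).Connected := by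
      intro c d hc hd hcu hdu hlo hhi hconn
      have hcT : c ∈ Sv \ {u} := ⟨hc, hcu⟩
      have hdT : d ∈ Sv \ {u} := ⟨hd, hdu⟩
      obtain ⟨p⟩ := hconn.preconnected ⟨c, hcT⟩ ⟨d, hdT⟩
      let f : G.induce (Sv \ {u}) →g SimpleGraph.pathGraph mm :=
        ⟨fun z => ep ⟨z.val, z.2.1⟩, by
          intro z w hzw
          exact ep.map_adj_iff.mpr (by simpa using hzw)⟩
      have hnoi : ∀ z ∈ (p.map f).support, z ≠ i := by
        intro z hz hzi
        rw [SimpleGraph.Walk.support_map, List.mem_map] at hz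
        obtain ⟨wz, hwz, hfwz⟩ := hz
        have : (⟨wz.val, wz.2.1⟩ : ↥Sv) = ⟨u, hus⟩ :=
          ep.injective (by rw [← hidef, ← hzi, ← hfwz]; rfl)
        exact wz.2.2 (congrArg Subtype.val this)
      have hstart : f ⟨c, hcT⟩ = ep ⟨c, hc⟩ := rfl
      have hend : f ⟨d, hdT⟩ = ep ⟨d, hd⟩ := rfl
      have := aux_path_invariant (p.map f) hnoi (by rw [hstart]; exact hlo)
      rw [hend] at this
      omega
    refine ⟨⟨a, haS.1, hau⟩, ?_⟩
    rcases hcase with ⟨h1, h2⟩ | ⟨h1, h2⟩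
    · exact core a b haS.1 hbS.1 hau hbu h1 h2
    · exact core b a hbS.1 haS.1 hbu hau h1 h2
  refine ⟨part1, eq2, ?_, ?_, eq5, ?_, eq7, ?_, ?_, part10⟩
  · rw [eq2]; exact part3
  · rw [eq2]; exact part4
  · rw [eq5]; exact part6
  · rw [eq7]; exact path89.1
  · rw [eq7]; exact path89.2
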